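/- With the same setup, Σ_{j=2}^{n−1} R̊(ξ_j,ξ_j) = (1/(n−1))(S − 2 Ric_{11}), where ξ_j = (1/(2√(j(j−1))))(Σ_{p=2}^j e_p⊙e_p − (j−1)e_{j+1}⊙e_{j+1}). -/

import Mathlib

open scoped BigOperators

/-- The symmetric product `u ⊙ v = u ⊗ v + v ⊗ u`, as a matrix in standard coordinates. -/
def sym2 {n : ℕ} (u v : Fin n → ℝ) : Matrix (Fin n) (Fin n) ℝ :=
  Matrix.of fun i j => u i * v j + v i * u j

/-- The inner product `⟨A, B⟩ = tr(Aᵀ B)` on two-tensors. -/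
def minner {n : ℕ} (A B : Matrix (Fin n) (Fin n) ℝ) : ℝ :=
  ∑ i, ∑ j, A i j * B i j

/-- The curvature operator of the second kind as a bilinear form on symmetric two-tensors:
`R̊(h₁,h₂) = Σ R_{iklj} (h₁)_{ij} (h₂)_{kl}`. -/
def Rsec {n : ℕ} (R : Fin n → Fin n → Fin n → Fin n → ℝ)
    (h₁ h₂ : Matrix (Fin n) (Fin n) ℝ) : ℝ :=
  ∑ i, ∑ j, ∑ k, ∑ l, R i k l j * h₁ i j * h₂ k l

/-- Multilinear evaluation of the curvature tensor on vectors. -/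
def Rap {n : ℕ} (R : Fin n → Fin n → Fin n → Fin n → ℝ) (u v w x : Fin n → ℝ) : ℝ :=
  ∑ i, ∑ j, ∑ k, ∑ l, R i j k l * u i * v j * w k * x l

/-- An algebraic curvature tensor: antisymmetric in each pair, symmetric in pairs,
first Bianchi identity. -/
def IsAlgCurv {n : ℕ} (R : Fin n → Fin n → Fin n → Fin n → ℝ) : Prop :=
  (∀ i j k l, R i j k l = - R j i k l) ∧ (∀ i j k l, R i j k l = - R i j l k) ∧
  (∀ i j k l, R i j k l = R k l i j) ∧
  (∀ i j k l, R i j k l + R i k l j + R i l j k = 0)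

/-- An orthonormal family of vectors in Euclidean space. -/
def OrthonormalFam {n m : ℕ} (v : Fin m → Fin n → ℝ) : Prop :=
  ∀ a b, (∑ k, v a k * v b k) = if a = b then (1 : ℝ) else 0

/-- `ξⱼ = (1/(2√(j(j−1))))(Σ_{p=2}^{j} e_p⊙e_p − (j−1)e_{j+1}⊙e_{j+1})`, 0-indexed so that
the 1-indexed vector `e_m` of the paper is `e (m-1)` and the 1-indexed label `j` is the
0-indexed label of `e_{j+1}`. -/
noncomputable def xiFam (n : ℕ) (e : Fin n → Fin n → ℝ) (j : Fin n) :
    Matrix (Fin n) (Fin n) ℝ :=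
  (1/(2*Real.sqrt ((j : ℝ)*((j : ℝ)-1)))) •
    ((∑ p ∈ Finset.univ.filter (fun p : Fin n => 1 ≤ (p : ℕ) ∧ (p : ℕ) < (j : ℕ)),
        sym2 (e p) (e p))
      - ((j : ℝ)-1) • sym2 (e j) (e j))

section aux
variable {n : ℕ}

lemma pull4 {α : Type*} (s : Finset α) (F : Fin n → Fin n → Fin n → Fin n → α → ℝ) :
    (∑ i, ∑ j, ∑ k, ∑ l, ∑ p ∈ s, F i j k l p)
      = ∑ p ∈ s, ∑ i, ∑ j, ∑ k, ∑ l, F i j k l p := by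
  refine (Finset.sum_congr rfl fun i _ => ?_).trans Finset.sum_comm
  refine (Finset.sum_congr rfl fun j _ => ?_).trans Finset.sum_comm
  refine (Finset.sum_congr rfl fun k _ => ?_).trans Finset.sum_comm
  exact Finset.sum_comm

lemma sum4_cycle (F : Fin n → Fin n → Fin n → Fin n → ℝ) :
    (∑ i, ∑ j, ∑ k, ∑ l, F i k l j) = ∑ i, ∑ j, ∑ k, ∑ l, F i j k l := by
  refine Finset.sum_congr rfl fun i _ => ?_
  exact Finset.sum_comm.trans (Finset.sum_congr rfl fun k _ => Finset.sum_comm)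

lemma sum4_swap2 (F : Fin n → Fin n → Fin n → Fin n → ℝ) :
    (∑ i, ∑ j, ∑ k, ∑ l, F j i l k) = ∑ i, ∑ j, ∑ k, ∑ l, F i j k l := by
  refine Finset.sum_comm.trans (Finset.sum_congr rfl fun j _ => Finset.sum_congr rfl fun i _ => ?_)
  exact Finset.sum_comm

variable (R : Fin n → Fin n → Fin n → Fin n → ℝ)

lemma Rsec_sub_left (h₁ h₂ g : Matrix (Fin n) (Fin n) ℝ) :
    Rsec R (h₁ - h₂) g = Rsec R h₁ g - Rsec R h₂ g := by
  simp [Rsec, Matrix.sub_apply, sub_mul, mul_sub, Finset.sum_sub_distrib]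

lemma Rsec_sub_right (g h₁ h₂ : Matrix (Fin n) (Fin n) ℝ) :
    Rsec R g (h₁ - h₂) = Rsec R g h₁ - Rsec R g h₂ := by
  simp [Rsec, Matrix.sub_apply, sub_mul, mul_sub, Finset.sum_sub_distrib]

lemma Rsec_smul_left (a : ℝ) (h g : Matrix (Fin n) (Fin n) ℝ) :
    Rsec R (a • h) g = a * Rsec R h g := by
  simp only [Rsec, Matrix.smul_apply, smul_eq_mul, Finset.mul_sum]
  refine Finset.sum_congr rfl fun i _ => Finset.sum_congr rfl fun j _ =>
    Finset.sum_congr rfl fun k _ => Finset.sum_congr rfl fun l _ => by ring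

lemma Rsec_smul_right (a : ℝ) (g h : Matrix (Fin n) (Fin n) ℝ) :
    Rsec R g (a • h) = a * Rsec R g h := by
  simp only [Rsec, Matrix.smul_apply, smul_eq_mul, Finset.mul_sum]
  refine Finset.sum_congr rfl fun i _ => Finset.sum_congr rfl fun j _ =>
    Finset.sum_congr rfl fun k _ => Finset.sum_congr rfl fun l _ => by ring

lemma Rsec_sum_left {α : Type*} (s : Finset α) (f : α → Matrix (Fin n) (Fin n) ℝ)
    (g : Matrix (Fin n) (Fin n) ℝ) :
    Rsec R (∑ p ∈ s, f p) g = ∑ p ∈ s, Rsec R (f p) g := by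
  simp only [Rsec, Matrix.sum_apply, Finset.mul_sum, Finset.sum_mul]
  exact pull4 s fun i j k l p => R i k l j * f p i j * g k l

lemma Rsec_sum_right {α : Type*} (s : Finset α) (g : Matrix (Fin n) (Fin n) ℝ)
    (f : α → Matrix (Fin n) (Fin n) ℝ) :
    Rsec R g (∑ p ∈ s, f p) = ∑ p ∈ s, Rsec R g (f p) := by
  simp only [Rsec, Matrix.sum_apply, Finset.mul_sum, Finset.sum_mul]
  exact pull4 s fun i j k l p => R i k l j * g i j * f p k l

lemma rsec_sym2 (h2 : ∀ i j k l, R i j k l = - R i j l k) (u w : Fin n → ℝ) :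
    Rsec R (sym2 u u) (sym2 w w) = -4 * Rap R u w u w := by
  have step1 : Rsec R (sym2 u u) (sym2 w w)
      = ∑ i, ∑ j, ∑ k, ∑ l, 4 * R i k l j * u i * w k * w l * u j := by
    refine Finset.sum_congr rfl fun i _ => Finset.sum_congr rfl fun j _ =>
      Finset.sum_congr rfl fun k _ => Finset.sum_congr rfl fun l _ => ?_
    simp only [sym2, Matrix.of_apply]
    ring
  rw [step1, sum4_cycle fun i j k l => 4 * R i j k l * u i * w j * w k * u l]
  have step2 : (∑ i, ∑ j, ∑ k, ∑ l, 4 * R i j k l * u i * w j * w k * u l)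
      = ∑ i, ∑ j, ∑ k, ∑ l, (-4) * R i j l k * u i * w j * w k * u l := by
    refine Finset.sum_congr rfl fun i _ => Finset.sum_congr rfl fun j _ =>
      Finset.sum_congr rfl fun k _ => Finset.sum_congr rfl fun l _ => ?_
    rw [h2 i j k l]; ring
  rw [step2]
  have step3 : (∑ i, ∑ j, ∑ k, ∑ l, (-4) * R i j l k * u i * w j * w k * u l)
      = ∑ i, ∑ j, ∑ k, ∑ l, (-4) * R i j k l * u i * w j * w l * u k := by
    refine Finset.sum_congr rfl fun i _ => Finset.sum_congr rfl fun j _ => ?_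
    exact Finset.sum_comm
  rw [step3, Rap, Finset.mul_sum]
  refine Finset.sum_congr rfl fun i _ => ?_
  rw [Finset.mul_sum]; refine Finset.sum_congr rfl fun j _ => ?_
  rw [Finset.mul_sum]; refine Finset.sum_congr rfl fun k _ => ?_
  rw [Finset.mul_sum]; refine Finset.sum_congr rfl fun l _ => ?_
  ring

lemma rap_diag (h1 : ∀ i j k l, R i j k l = - R j i k l) (u w x : Fin n → ℝ) :
    Rap R u u w x = 0 := by
  have key : Rap R u u w x = - Rap R u u w x := by
    conv_lhs => rw [Rap]
    have e1 : (∑ i, ∑ j, ∑ k, ∑ l, R i j k l * u i * u j * w k * x l)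
        = ∑ i, ∑ j, ∑ k, ∑ l, -(R j i k l * u j * u i * w k * x l) := by
      refine Finset.sum_congr rfl fun i _ => Finset.sum_congr rfl fun j _ =>
        Finset.sum_congr rfl fun k _ => Finset.sum_congr rfl fun l _ => ?_
      rw [h1 i j k l]; ring
    rw [e1]
    simp only [Finset.sum_neg_distrib]
    rw [Rap, neg_inj]
    exact Finset.sum_comm
  linarith

lemma rap_swap (h1 : ∀ i j k l, R i j k l = - R j i k l)
    (h2 : ∀ i j k l, R i j k l = - R i j l k) (u v w x : Fin n → ℝ) :
    Rap R u v w x = Rap R v u x w := by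
  conv_lhs => rw [Rap]
  have e1 : (∑ i, ∑ j, ∑ k, ∑ l, R i j k l * u i * v j * w k * x l)
      = ∑ i, ∑ j, ∑ k, ∑ l,
          (fun a b c d => R a b c d * v a * u b * x c * w d) j i l k := by
    refine Finset.sum_congr rfl fun i _ => Finset.sum_congr rfl fun j _ =>
      Finset.sum_congr rfl fun k _ => Finset.sum_congr rfl fun l _ => ?_
    simp only
    rw [show R j i l k = R i j k l by rw [h1 i j k l, h2 j i k l]; ring]
    ring
  rw [e1, sum4_swap2]
  rfl

lemma telescope (g : ℕ → ℕ → ℝ) (hsym : ∀ p q, g p q = g q p) (hdiag : ∀ p, g p p = 0)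
    (m : ℕ) (hm : 2 ≤ m) :
    (∑ j ∈ Finset.Ico 2 m,
      ((2/(j:ℝ)) * ∑ p ∈ Finset.Ico 1 j, g p j
        - (1/((j:ℝ)*((j:ℝ)-1))) * ∑ p ∈ Finset.Ico 1 j, ∑ q ∈ Finset.Ico 1 j, g p q))
      = (1/((m:ℝ)-1)) * ∑ p ∈ Finset.Ico 1 m, ∑ q ∈ Finset.Ico 1 m, g p q := by
  induction m, hm using Nat.le_induction with
  | base => simp [Finset.sum_Ico_succ_top, hdiag]
  | succ m hm ih =>
    have hD : (∑ p ∈ Finset.Ico 1 (m+1), ∑ q ∈ Finset.Ico 1 (m+1), g p q)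
        = (∑ p ∈ Finset.Ico 1 m, ∑ q ∈ Finset.Ico 1 m, g p q)
          + 2 * ∑ p ∈ Finset.Ico 1 m, g p m := by
      rw [Finset.sum_Ico_succ_top (by omega)]
      have h1 : ∀ p, (∑ q ∈ Finset.Ico 1 (m+1), g p q)
          = (∑ q ∈ Finset.Ico 1 m, g p q) + g p m := fun p =>
        Finset.sum_Ico_succ_top (by omega) _
      rw [Finset.sum_congr rfl fun p _ => h1 p, Finset.sum_add_distrib, h1, hdiag]
      have h2 : (∑ q ∈ Finset.Ico 1 m, g m q) = ∑ q ∈ Finset.Ico 1 m, g q m :=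
        Finset.sum_congr rfl fun q _ => hsym m q
      rw [h2]; ring
    rw [Finset.sum_Ico_succ_top (by omega), ih, hD]
    have hm0 : (m:ℝ) ≠ 0 := by positivity
    have hm1 : (m:ℝ) - 1 ≠ 0 := by
      have : (2:ℝ) ≤ m := by exact_mod_cast hm
      intro h; nlinarith
    push_cast
    field_simp
    have hinv : (m:ℝ) * (m:ℝ)⁻¹ = 1 := mul_inv_cancel₀ hm0
    linear_combination (-((m:ℝ) * ∑ x ∈ Finset.Ico 1 m, ∑ q ∈ Finset.Ico 1 m, g x q
      + 2 * (m:ℝ) * ∑ p ∈ Finset.Ico 1 m, g p m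
      - ∑ x ∈ Finset.Ico 1 m, ∑ q ∈ Finset.Ico 1 m, g x q
      - 2 * ∑ p ∈ Finset.Ico 1 m, g p m)) * hinv

lemma fin_filter_sum (n : ℕ) (j : ℕ) (f : ℕ → ℝ) :
    (∑ p ∈ Finset.univ.filter (fun p : Fin n => 1 ≤ (p:ℕ) ∧ (p:ℕ) < j), f (p:ℕ))
      = ∑ p ∈ Finset.Ico 1 (min j n), f p := by
  rw [Finset.sum_filter,
    Fin.sum_univ_eq_sum_range (fun m => if 1 ≤ m ∧ m < j then f m else 0) n,
    ← Finset.sum_filter]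
  congr 1
  ext x
  simp only [Finset.mem_filter, Finset.mem_range, Finset.mem_Ico]
  omega

lemma fin_filter_sum2 (n : ℕ) (f : ℕ → ℝ) :
    (∑ p ∈ Finset.univ.filter (fun p : Fin n => 2 ≤ (p:ℕ)), f (p:ℕ))
      = ∑ p ∈ Finset.Ico 2 n, f p := by
  rw [Finset.sum_filter,
    Fin.sum_univ_eq_sum_range (fun m => if 2 ≤ m then f m else 0) n,
    ← Finset.sum_filter]
  congr 1
  ext x
  simp only [Finset.mem_filter, Finset.mem_range, Finset.mem_Ico]
  omega

lemma range_split (n : ℕ) (hn : 1 ≤ n) (f : ℕ → ℝ) :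
    (∑ x ∈ Finset.range n, f x) = f 0 + ∑ x ∈ Finset.Ico 1 n, f x := by
  rw [Finset.range_eq_Ico, ← Finset.sum_Ico_consecutive f (Nat.zero_le 1) hn]
  simp

end aux

/-- `Σ_{j=2}^{n−1} R̊(ξⱼ,ξⱼ) = (1/(n−1))(S − 2 Ric₁₁)`. -/
theorem statement_11 (n : ℕ) (hn : 3 ≤ n)
    (R : Fin n → Fin n → Fin n → Fin n → ℝ) (hR : IsAlgCurv R)
    (e : Fin n → Fin n → ℝ) (he : OrthonormalFam e) :
    (∑ j ∈ Finset.univ.filter (fun j : Fin n => 2 ≤ (j : ℕ)),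
        Rsec R (xiFam n e j) (xiFam n e j)) =
      ((∑ i, ∑ j, Rap R (e i) (e j) (e i) (e j))
        - 2 * (∑ j, Rap R (e ⟨0, by omega⟩) (e j) (e ⟨0, by omega⟩) (e j))) / ((n : ℝ)-1) := by
  classical
  obtain ⟨h1, h2, h3, h4⟩ := hR
  -- the "sectional curvature" array, extended to ℕ × ℕ
  set g : ℕ → ℕ → ℝ := fun p q =>
    if h : p < n ∧ q < n then Rap R (e ⟨p, h.1⟩) (e ⟨q, h.2⟩) (e ⟨p, h.1⟩) (e ⟨q, h.2⟩)
    else 0 with hgdef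
  have hg : ∀ a b : Fin n, g (a:ℕ) (b:ℕ) = Rap R (e a) (e b) (e a) (e b) := by
    intro a b
    simp only [hgdef]
    rw [dif_pos ⟨a.isLt, b.isLt⟩]
  have hgsym : ∀ p q, g p q = g q p := by
    intro p q
    simp only [hgdef]
    split_ifs with hpq hqp hqp
    · exact rap_swap R h1 h2 _ _ _ _
    · exact absurd ⟨hpq.2, hpq.1⟩ hqp
    · exact absurd ⟨hqp.2, hqp.1⟩ hpq
    · rfl
  have hgdiag : ∀ p, g p p = 0 := by
    intro p
    simp only [hgdef]
    split_ifs with h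
    · exact rap_diag R h1 _ _ _
    · rfl
  -- the per-j computation
  have hper : ∀ j : Fin n, 2 ≤ (j:ℕ) →
      Rsec R (xiFam n e j) (xiFam n e j)
        = (2/((j:ℕ):ℝ)) * (∑ p ∈ Finset.Ico 1 (j:ℕ), g p (j:ℕ))
          - (1/(((j:ℕ):ℝ)*(((j:ℕ):ℝ)-1)))
              * ∑ p ∈ Finset.Ico 1 (j:ℕ), ∑ q ∈ Finset.Ico 1 (j:ℕ), g p q := by
    intro j hj
    have hjr2 : (2:ℝ) ≤ ((j:ℕ):ℝ) := by exact_mod_cast hj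
    have hAA : Rsec R
        (∑ p ∈ Finset.univ.filter (fun p : Fin n => 1 ≤ (p:ℕ) ∧ (p:ℕ) < (j:ℕ)),
          sym2 (e p) (e p))
        (∑ p ∈ Finset.univ.filter (fun p : Fin n => 1 ≤ (p:ℕ) ∧ (p:ℕ) < (j:ℕ)),
          sym2 (e p) (e p))
        = -4 * ∑ p ∈ Finset.univ.filter (fun p : Fin n => 1 ≤ (p:ℕ) ∧ (p:ℕ) < (j:ℕ)),
            ∑ q ∈ Finset.univ.filter (fun p : Fin n => 1 ≤ (p:ℕ) ∧ (p:ℕ) < (j:ℕ)),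
              Rap R (e p) (e q) (e p) (e q) := by
      rw [Rsec_sum_left, Finset.mul_sum]
      refine Finset.sum_congr rfl fun p _ => ?_
      rw [Rsec_sum_right, Finset.mul_sum]
      exact Finset.sum_congr rfl fun q _ => rsec_sym2 R h2 _ _
    have hAB : Rsec R
        (∑ p ∈ Finset.univ.filter (fun p : Fin n => 1 ≤ (p:ℕ) ∧ (p:ℕ) < (j:ℕ)),
          sym2 (e p) (e p)) (sym2 (e j) (e j))
        = -4 * ∑ p ∈ Finset.univ.filter (fun p : Fin n => 1 ≤ (p:ℕ) ∧ (p:ℕ) < (j:ℕ)),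
            Rap R (e p) (e j) (e p) (e j) := by
      rw [Rsec_sum_left, Finset.mul_sum]
      exact Finset.sum_congr rfl fun p _ => rsec_sym2 R h2 _ _
    have hBA : Rsec R (sym2 (e j) (e j))
        (∑ p ∈ Finset.univ.filter (fun p : Fin n => 1 ≤ (p:ℕ) ∧ (p:ℕ) < (j:ℕ)),
          sym2 (e p) (e p))
        = -4 * ∑ p ∈ Finset.univ.filter (fun p : Fin n => 1 ≤ (p:ℕ) ∧ (p:ℕ) < (j:ℕ)),
            Rap R (e p) (e j) (e p) (e j) := by
      rw [Rsec_sum_right, Finset.mul_sum]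
      refine Finset.sum_congr rfl fun p _ => ?_
      rw [rsec_sym2 R h2, rap_swap R h1 h2]
    have hBB : Rsec R (sym2 (e j) (e j)) (sym2 (e j) (e j)) = 0 := by
      rw [rsec_sym2 R h2, rap_diag R h1]; ring
    have hsqrt : Real.sqrt (((j:ℕ):ℝ)*(((j:ℕ):ℝ)-1)) * Real.sqrt (((j:ℕ):ℝ)*(((j:ℕ):ℝ)-1))
        = ((j:ℕ):ℝ)*(((j:ℕ):ℝ)-1) :=
      Real.mul_self_sqrt (by nlinarith)
    -- convert Fin-indexed sums to Ico sums
    have hconv1 : (∑ p ∈ Finset.univ.filter (fun p : Fin n => 1 ≤ (p:ℕ) ∧ (p:ℕ) < (j:ℕ)),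
          Rap R (e p) (e j) (e p) (e j))
        = ∑ p ∈ Finset.Ico 1 (j:ℕ), g p (j:ℕ) := by
      rw [show (∑ p ∈ Finset.univ.filter (fun p : Fin n => 1 ≤ (p:ℕ) ∧ (p:ℕ) < (j:ℕ)),
            Rap R (e p) (e j) (e p) (e j))
          = ∑ p ∈ Finset.univ.filter (fun p : Fin n => 1 ≤ (p:ℕ) ∧ (p:ℕ) < (j:ℕ)),
              (fun m => g m (j:ℕ)) (p:ℕ) from
        Finset.sum_congr rfl fun p _ => (hg p j).symm]
      rw [fin_filter_sum n (j:ℕ) (fun m => g m (j:ℕ))]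
      congr 1
      congr 1
      omega
    have hconv2 : (∑ p ∈ Finset.univ.filter (fun p : Fin n => 1 ≤ (p:ℕ) ∧ (p:ℕ) < (j:ℕ)),
          ∑ q ∈ Finset.univ.filter (fun p : Fin n => 1 ≤ (p:ℕ) ∧ (p:ℕ) < (j:ℕ)),
            Rap R (e p) (e q) (e p) (e q))
        = ∑ p ∈ Finset.Ico 1 (j:ℕ), ∑ q ∈ Finset.Ico 1 (j:ℕ), g p q := by
      have inner : ∀ p : Fin n,
          (∑ q ∈ Finset.univ.filter (fun p : Fin n => 1 ≤ (p:ℕ) ∧ (p:ℕ) < (j:ℕ)),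
            Rap R (e p) (e q) (e p) (e q))
          = (fun m => ∑ q ∈ Finset.Ico 1 (j:ℕ), g m q) (p:ℕ) := by
        intro p
        simp only
        rw [show (∑ q ∈ Finset.univ.filter (fun p : Fin n => 1 ≤ (p:ℕ) ∧ (p:ℕ) < (j:ℕ)),
              Rap R (e p) (e q) (e p) (e q))
            = ∑ q ∈ Finset.univ.filter (fun p : Fin n => 1 ≤ (p:ℕ) ∧ (p:ℕ) < (j:ℕ)),
                (fun m => g (p:ℕ) m) (q:ℕ) from
          Finset.sum_congr rfl fun q _ => (hg p q).symm]
        rw [fin_filter_sum n (j:ℕ) (fun m => g (p:ℕ) m)]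
        congr 1
        congr 1
        omega
      rw [Finset.sum_congr rfl fun p _ => inner p]
      rw [fin_filter_sum n (j:ℕ) (fun m => ∑ q ∈ Finset.Ico 1 (j:ℕ), g m q)]
      congr 1
      congr 1
      omega
    rw [xiFam, Rsec_smul_left, Rsec_smul_right, Rsec_sub_left, Rsec_sub_right,
      Rsec_sub_right, Rsec_smul_right, Rsec_smul_left, Rsec_smul_left, Rsec_smul_right,
      hAA, hAB, hBA, hBB, hconv1, hconv2]
    have hj0 : ((j:ℕ):ℝ) ≠ 0 := by nlinarith
    have hj1 : ((j:ℕ):ℝ) - 1 ≠ 0 := by nlinarith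
    have hs0 : Real.sqrt (((j:ℕ):ℝ)*(((j:ℕ):ℝ)-1)) ≠ 0 := by
      intro h
      rw [h, mul_zero] at hsqrt
      nlinarith
    have hc : (1/(2*Real.sqrt (((j:ℕ):ℝ)*(((j:ℕ):ℝ)-1))))
          * (1/(2*Real.sqrt (((j:ℕ):ℝ)*(((j:ℕ):ℝ)-1))))
        = 1/(4*(((j:ℕ):ℝ)*(((j:ℕ):ℝ)-1))) := by
      rw [div_mul_div_comm, one_mul]
      congr 1
      rw [show (2*Real.sqrt (((j:ℕ):ℝ)*(((j:ℕ):ℝ)-1)))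
            * (2*Real.sqrt (((j:ℕ):ℝ)*(((j:ℕ):ℝ)-1)))
          = 4*(Real.sqrt (((j:ℕ):ℝ)*(((j:ℕ):ℝ)-1))
              * Real.sqrt (((j:ℕ):ℝ)*(((j:ℕ):ℝ)-1))) from by ring, hsqrt]
    conv_lhs => rw [← mul_assoc]
    rw [hc]
    field_simp
    ring
  -- sum over j, converted to an Ico sum over ℕ
  have hleft : (∑ j ∈ Finset.univ.filter (fun j : Fin n => 2 ≤ (j : ℕ)),
        Rsec R (xiFam n e j) (xiFam n e j))
      = ∑ m ∈ Finset.Ico 2 n,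
          ((2/(m:ℝ)) * ∑ p ∈ Finset.Ico 1 m, g p m
            - (1/((m:ℝ)*((m:ℝ)-1))) * ∑ p ∈ Finset.Ico 1 m, ∑ q ∈ Finset.Ico 1 m, g p q) := by
    rw [show (∑ j ∈ Finset.univ.filter (fun j : Fin n => 2 ≤ (j : ℕ)),
          Rsec R (xiFam n e j) (xiFam n e j))
        = ∑ j ∈ Finset.univ.filter (fun j : Fin n => 2 ≤ (j : ℕ)),
            (fun m : ℕ => (2/(m:ℝ)) * ∑ p ∈ Finset.Ico 1 m, g p m
              - (1/((m:ℝ)*((m:ℝ)-1))) * ∑ p ∈ Finset.Ico 1 m, ∑ q ∈ Finset.Ico 1 m, g p q)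
              (j:ℕ) from
      Finset.sum_congr rfl fun j hjmem => by
        have := (Finset.mem_filter.mp hjmem).2
        exact hper j this]
    exact fin_filter_sum2 n (fun m : ℕ => (2/(m:ℝ)) * ∑ p ∈ Finset.Ico 1 m, g p m
      - (1/((m:ℝ)*((m:ℝ)-1))) * ∑ p ∈ Finset.Ico 1 m, ∑ q ∈ Finset.Ico 1 m, g p q)
  rw [hleft, telescope g hgsym hgdiag n (by omega)]
  -- now the right-hand side
  have inner0 : ∀ i : Fin n,
      (∑ b : Fin n, Rap R (e i) (e b) (e i) (e b)) = ∑ b ∈ Finset.range n, g (i:ℕ) b := by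
    intro i
    rw [← Fin.sum_univ_eq_sum_range (fun m => g (i:ℕ) m) n]
    exact Finset.sum_congr rfl fun b _ => (hg i b).symm
  have hS : (∑ i, ∑ b, Rap R (e i) (e b) (e i) (e b))
      = ∑ i ∈ Finset.range n, ∑ b ∈ Finset.range n, g i b := by
    rw [Finset.sum_congr rfl fun i _ => inner0 i]
    exact Fin.sum_univ_eq_sum_range (fun m => ∑ b ∈ Finset.range n, g m b) n
  have hRic : (∑ b : Fin n, Rap R (e ⟨0, by omega⟩) (e b) (e ⟨0, by omega⟩) (e b))
      = ∑ b ∈ Finset.range n, g 0 b := inner0 ⟨0, by omega⟩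
  rw [hS, hRic]
  have h1n : 1 ≤ n := by omega
  have hsplit1 : (∑ i ∈ Finset.range n, ∑ b ∈ Finset.range n, g i b)
      = (∑ b ∈ Finset.range n, g 0 b)
        + ∑ i ∈ Finset.Ico 1 n, ∑ b ∈ Finset.range n, g i b :=
    range_split n h1n _
  have hsplit2 : ∀ i, (∑ b ∈ Finset.range n, g i b)
      = g i 0 + ∑ b ∈ Finset.Ico 1 n, g i b := fun i => range_split n h1n _
  have hrow : (∑ b ∈ Finset.range n, g 0 b) = ∑ b ∈ Finset.Ico 1 n, g 0 b := by
    rw [hsplit2 0, hgdiag 0, zero_add]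
  have hcol : (∑ i ∈ Finset.Ico 1 n, g i 0) = ∑ b ∈ Finset.Ico 1 n, g 0 b :=
    Finset.sum_congr rfl fun i _ => hgsym i 0
  have hD : (∑ i ∈ Finset.range n, ∑ b ∈ Finset.range n, g i b)
      - 2 * (∑ b ∈ Finset.range n, g 0 b)
      = ∑ p ∈ Finset.Ico 1 n, ∑ q ∈ Finset.Ico 1 n, g p q := by
    rw [hsplit1, Finset.sum_congr rfl fun i _ => hsplit2 i, Finset.sum_add_distrib, hcol, hrow]
    ring
  rw [hD, one_div, inv_mul_eq_div]
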